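/- arXiv:1207.1155 — 3 statements merged into one kernel-verified Lean document; each statement's English description precedes it below -/
import Mathlib

section
/- Let 0 < q < 1, let N ≥ 1 be an integer, let C > 0 and r > 0, and let h be a holomorphic function on the open disc D_r = {x ∈ ℂ : |x| < r} of the form h(x) = q·x·(1 + ρ(x)) with |ρ(x)| ≤ C|x|^N on D_r. Then there exists r' ∈ (0, r] such that h is injective on D_{r'}, h maps D_{r'} \ {0} into D_{r'} \ {0}, and every finite Borel measure μ on D_{r'} \ {0} satisfying μ(h(A)) = μ(A) for every Borel set A ⊆ D_{r'} \ {0} is the zero measure. -/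
open MeasureTheory Metric

set_option maxHeartbeats 1000000

/-- The contracting-holonomy argument of II.2.3 (case `λ ∈ ℝ(1)`): for a
holomorphic germ `h(x) = q·x·(1 + ρ(x))` with `0 < q < 1` and `|ρ(x)| ≤ C|x|^N`,
there is a small disc on which `h` is injective, maps the punctured disc into
itself, and admits no nonzero finite invariant Borel measure on the punctured
disc. -/
theorem contracting_holonomy_no_invariant_measure
    (q : ℝ) (hq0 : 0 < q) (hq1 : q < 1)
    (N : ℕ) (hN : 1 ≤ N) (C : ℝ) (hC : 0 < C) (r : ℝ) (hr : 0 < r)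
    (h ρ : ℂ → ℂ)
    (hhol : DifferentiableOn ℂ h (ball (0 : ℂ) r))
    (hform : ∀ x ∈ ball (0 : ℂ) r, h x = (q : ℂ) * x * (1 + ρ x))
    (hρ : ∀ x ∈ ball (0 : ℂ) r, ‖ρ x‖ ≤ C * ‖x‖ ^ N) :
    ∃ r' : ℝ, 0 < r' ∧ r' ≤ r ∧
      Set.InjOn h (ball (0 : ℂ) r') ∧
      Set.MapsTo h (ball (0 : ℂ) r' \ {0}) (ball (0 : ℂ) r' \ {0}) ∧
      ∀ μ : Measure ℂ, IsFiniteMeasure μ →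
        μ ((ball (0 : ℂ) r' \ {0})ᶜ) = 0 →
        (∀ A : Set ℂ, A ⊆ ball (0 : ℂ) r' \ {0} → MeasurableSet A →
          μ (h '' A) = μ A) →
        μ = 0 := by
  -- Choose a small radius.
  set δ₀ : ℝ := min (1/12) ((1-q)/(2*q)) with hδ₀def
  have hδ₀pos : 0 < δ₀ := lt_min (by norm_num) (div_pos (by linarith) (by linarith))
  have hδ₀12 : δ₀ ≤ 1/12 := min_le_left _ _
  have hδ₀q : δ₀ ≤ (1-q)/(2*q) := min_le_right _ _
  set t : ℝ := (δ₀ / C) ^ ((N:ℝ)⁻¹) with htdef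
  have htpos : 0 < t := Real.rpow_pos_of_pos (by positivity) _
  set s : ℝ := min r t with hsdef
  have hspos : 0 < s := lt_min hr htpos
  have hsr : s ≤ r := min_le_left _ _
  have hst : s ≤ t := min_le_right _ _
  have hCs : C * s ^ N ≤ δ₀ := by
    have h1 : s ^ N ≤ t ^ N := pow_le_pow_left₀ hspos.le hst N
    have h2 : t ^ N = δ₀ / C := by
      rw [htdef, ← Real.rpow_natCast (((δ₀/C) ^ ((N:ℝ)⁻¹))) N, ← Real.rpow_mul (by positivity)]
      rw [inv_mul_cancel₀ (by exact_mod_cast Nat.pos_of_ne_zero (by omega) |>.ne'), Real.rpow_one]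
    calc C * s ^ N ≤ C * t ^ N := by nlinarith
    _ = δ₀ := by rw [h2]; field_simp
  set r' : ℝ := s / 2 with hr'def
  have hr'pos : 0 < r' := by positivity
  have hr's : r' < s := by simp [hr'def]; linarith
  have hballs : ball (0:ℂ) s ⊆ ball (0:ℂ) r := ball_subset_ball hsr
  have hballr' : ball (0:ℂ) r' ⊆ ball (0:ℂ) s := ball_subset_ball hr's.le
  -- bound on ρ on ball s
  have hρs : ∀ x ∈ ball (0:ℂ) s, ‖ρ x‖ ≤ δ₀ := by
    intro x hx
    have hxr : x ∈ ball (0:ℂ) r := hballs hx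
    have hxs : ‖x‖ < s := by simpa [mem_ball, Complex.dist_eq] using hx
    have := hρ x hxr
    have hxN : ‖x‖ ^ N ≤ s ^ N := pow_le_pow_left₀ (norm_nonneg _) hxs.le N
    nlinarith [norm_nonneg (ρ x)]
  set κ : ℝ := (1 + q) / 2 with hκdef
  have hκ1 : κ < 1 := by rw [hκdef]; linarith
  have hκ0 : 0 < κ := by rw [hκdef]; linarith
  -- contraction
  have hcontr : ∀ x ∈ ball (0:ℂ) s, ‖h x‖ ≤ κ * ‖x‖ := by
    intro x hx
    rw [hform x (hballs hx)]
    have h1 : ‖1 + ρ x‖ ≤ 1 + δ₀ := by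
      calc ‖1 + ρ x‖ ≤ ‖(1:ℂ)‖ + ‖ρ x‖ := norm_add_le _ _
      _ ≤ 1 + δ₀ := by simpa using hρs x hx
    have hq' : q * (1 + δ₀) ≤ κ := by
      rw [hκdef]
      have : q * δ₀ ≤ q * ((1-q)/(2*q)) := by nlinarith
      have h2 : q * ((1-q)/(2*q)) = (1-q)/2 := by field_simp
      nlinarith
    calc ‖(q:ℂ) * x * (1 + ρ x)‖ = q * ‖x‖ * ‖1 + ρ x‖ := by
          simp [norm_mul, abs_of_pos hq0]
    _ ≤ q * ‖x‖ * (1 + δ₀) := by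
          have := mul_le_mul_of_nonneg_left h1 (show (0:ℝ) ≤ q * ‖x‖ by positivity)
          linarith
    _ = q * (1 + δ₀) * ‖x‖ := by ring
    _ ≤ κ * ‖x‖ := by nlinarith [norm_nonneg x]
  have hne0 : ∀ x ∈ ball (0:ℂ) s, x ≠ 0 → h x ≠ 0 := by
    intro x hx hx0
    rw [hform x (hballs hx)]
    have : (1 : ℂ) + ρ x ≠ 0 := by
      intro hc
      have : ‖ρ x‖ = 1 := by
        have : ρ x = -1 := by linear_combination hc
        simp [this]
      have := hρs x hx
      linarith [hδ₀12]
    have hqC : (q : ℂ) ≠ 0 := Complex.ofReal_ne_zero.mpr hq0.ne'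
    exact mul_ne_zero (mul_ne_zero hqC hx0) this
  -- the auxiliary function g
  set g : ℂ → ℂ := fun x => h x / (q:ℂ) - x with hgdef
  have hqC : (q : ℂ) ≠ 0 := Complex.ofReal_ne_zero.mpr hq0.ne'
  have hgdiff : DifferentiableOn ℂ g (ball (0:ℂ) r) :=
    (hhol.div_const _).sub differentiableOn_id
  have hgeq : ∀ x ∈ ball (0:ℂ) r, g x = x * ρ x := by
    intro x hx
    rw [hgdef]; simp only
    rw [hform x hx]
    field_simp
    ring
  have hhg : ∀ x ∈ ball (0:ℂ) r, h x = (q:ℂ) * (x + g x) := by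
    intro x hx
    rw [hgdef]; simp only
    field_simp
    ring
  set M : ℝ := δ₀ * s with hMdef
  have hMpos : 0 < M := by positivity
  have hgbd : ∀ x ∈ ball (0:ℂ) s, ‖g x‖ ≤ M := by
    intro x hx
    rw [hgeq x (hballs hx)]
    have hxs : ‖x‖ < s := by simpa [mem_ball, Complex.dist_eq] using hx
    have := hρs x hx
    rw [norm_mul, hMdef]
    nlinarith [norm_nonneg x, norm_nonneg (ρ x)]
  -- Lipschitz bound via Schwarz
  have hLip : ∀ x ∈ ball (0:ℂ) r', ∀ y ∈ ball (0:ℂ) r', dist (g x) (g y) ≤ (1/2) * dist x y := by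
    intro x hx y hy
    have hsub : ball y r' ⊆ ball (0:ℂ) s := by
      intro z hz
      have h1 : dist z y < r' := by simpa [mem_ball] using hz
      have h2 : dist y 0 < r' := by simpa [mem_ball] using hy
      have : dist z 0 < s := by
        calc dist z 0 ≤ dist z y + dist y 0 := dist_triangle _ _ _
        _ < r' + r' := by linarith
        _ = s := by rw [hr'def]; ring
      simpa [mem_ball] using this
    have hd : DifferentiableOn ℂ g (ball y r') := hgdiff.mono (hsub.trans hballs)
    have hmaps : Set.MapsTo g (ball y r') (ball (g y) (3 * M)) := by
      intro z hz
      have h1 := hgbd z (hsub hz)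
      have h2 := hgbd y (hsub (mem_ball_self hr'pos))
      have : dist (g z) (g y) < 3 * M := by
        calc dist (g z) (g y) ≤ ‖g z‖ + ‖g y‖ := dist_le_norm_add_norm _ _
        _ ≤ 2 * M := by linarith
        _ < 3 * M := by linarith
      simpa [mem_ball] using this
    have hx' : x ∈ ball y r' → dist (g x) (g y) ≤ 3 * M / r' * dist x y :=
      fun hxy => Complex.dist_le_div_mul_dist_of_mapsTo_ball hd (hmaps.mono_right ball_subset_closedBall) hxy
    by_cases hxy : x ∈ ball y r'
    · have := hx' hxy
      have hratio : 3 * M / r' ≤ 1/2 := by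
        rw [hMdef, hr'def, div_le_iff₀ (by positivity)]
        have : δ₀ ≤ 1/12 := hδ₀12
        nlinarith
      have hd0 : (0:ℝ) ≤ dist x y := dist_nonneg
      nlinarith
    · -- x far from y : use crude bound
      have hfar : r' ≤ dist x y := by
        by_contra hc
        exact hxy (by simpa [mem_ball] using lt_of_not_ge hc)
      have h1 := hgbd x (hballr' hx)
      have h2 := hgbd y (hballr' hy)
      have h3 : dist (g x) (g y) ≤ 2 * M := by
        calc dist (g x) (g y) ≤ ‖g x‖ + ‖g y‖ := dist_le_norm_add_norm _ _
        _ ≤ 2 * M := by linarith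
      have hM' : 2 * M ≤ (1/2) * r' := by
        rw [hMdef, hr'def]
        nlinarith
      nlinarith
  -- injectivity
  have hinj : Set.InjOn h (ball (0:ℂ) r') := by
    intro x hx y hy hxy
    have hx' : x ∈ ball (0:ℂ) r := hballs (hballr' hx)
    have hy' : y ∈ ball (0:ℂ) r := hballs (hballr' hy)
    have he : (q:ℂ) * (x + g x) = (q:ℂ) * (y + g y) := by
      rw [← hhg x hx', ← hhg y hy', hxy]
    have he2 : x + g x = y + g y := mul_left_cancel₀ hqC he
    have he3 : x - y = g y - g x := by linear_combination he2
    have h4 : ‖x - y‖ ≤ (1/2) * ‖x - y‖ := by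
      calc ‖x - y‖ = ‖g y - g x‖ := by rw [he3]
      _ = dist (g y) (g x) := (dist_eq_norm _ _).symm
      _ ≤ (1/2) * dist y x := hLip y hy x hx
      _ = (1/2) * ‖x - y‖ := by rw [dist_eq_norm, norm_sub_rev]
    have : ‖x - y‖ ≤ 0 := by linarith
    have := le_antisymm this (norm_nonneg _)
    exact sub_eq_zero.mp (norm_eq_zero.mp this)
  -- maps-to
  have hmaps : Set.MapsTo h (ball (0:ℂ) r' \ {0}) (ball (0:ℂ) r' \ {0}) := by
    rintro x ⟨hx, hx0⟩
    have hx0' : x ≠ 0 := hx0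
    have hxs : x ∈ ball (0:ℂ) s := hballr' hx
    have hxn : ‖x‖ < r' := by simpa [mem_ball, Complex.dist_eq] using hx
    constructor
    · have h1 := hcontr x hxs
      have : ‖h x‖ < r' := by
        have hx0n : 0 < ‖x‖ := norm_pos_iff.mpr hx0'
        calc ‖h x‖ ≤ κ * ‖x‖ := h1
        _ < 1 * ‖x‖ := by nlinarith
        _ < r' := by linarith
      simpa [mem_ball, Complex.dist_eq] using this
    · exact hne0 x hxs hx0'
  refine ⟨r', hr'pos, le_trans hr's.le hsr, hinj, hmaps, ?_⟩
  -- measure part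
  intro μ hfin hnull hinv
  set S : Set ℂ := ball (0:ℂ) r' \ {0} with hSdef
  have hSsub : S ⊆ ball (0:ℂ) s := fun x hx => hballr' hx.1
  have hcont : ContinuousOn h (ball (0:ℂ) r) := hhol.continuousOn
  -- iterates stay in S and contract
  have hiter : ∀ n : ℕ, ∀ x ∈ S, h^[n] x ∈ S ∧ ‖h^[n] x‖ ≤ κ ^ n * ‖x‖ := by
    intro n
    induction n with
    | zero => intro x hx; simpa using hx
    | succ n ih =>
      intro x hx
      obtain ⟨hmem, hbd⟩ := ih x hx
      rw [Function.iterate_succ_apply']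
      refine ⟨hmaps hmem, ?_⟩
      have h1 := hcontr _ (hSsub hmem)
      calc ‖h (h^[n] x)‖ ≤ κ * ‖h^[n] x‖ := h1
      _ ≤ κ * (κ ^ n * ‖x‖) := by nlinarith
      _ = κ ^ (n+1) * ‖x‖ := by ring
  -- every compact subset of S has measure zero
  have hcompact : ∀ K : Set ℂ, IsCompact K → K ⊆ S → μ K = 0 := by
    intro K hK hKS
    have hit : ∀ n : ℕ, IsCompact (h^[n] '' K) ∧ h^[n] '' K ⊆ S ∧ μ (h^[n] '' K) = μ K := by
      intro n
      induction n with
      | zero => simpa using ⟨hK, hKS⟩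
      | succ n ih =>
        obtain ⟨hc, hsub, hμ⟩ := ih
        have himg : h^[n+1] '' K = h '' (h^[n] '' K) := by
          rw [Function.iterate_succ', Set.image_comp]
        refine ⟨?_, ?_, ?_⟩
        · rw [himg]
          exact hc.image_of_continuousOn (hcont.mono (fun x hx => hballs (hSsub (hsub hx))))
        · rw [himg]
          exact (hmaps.mono_left hsub).image_subset
        · rw [himg, hinv _ hsub hc.measurableSet, hμ]
    -- the image shrinks into small balls
    have hsmall : ∀ n : ℕ, h^[n] '' K ⊆ ball (0:ℂ) (κ ^ n * r') := by
      rintro n z ⟨x, hxK, rfl⟩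
      have hxS := hKS hxK
      have hxn : ‖x‖ < r' := by
        have := hxS.1
        simpa [mem_ball, Complex.dist_eq] using this
      have := (hiter n x hxS).2
      have hκn : 0 < κ ^ n := pow_pos hκ0 n
      have : ‖h^[n] x‖ < κ ^ n * r' := by nlinarith
      simpa [mem_ball, Complex.dist_eq] using this
    have hbd : ∀ n : ℕ, μ K ≤ μ (ball (0:ℂ) (κ ^ n * r')) := by
      intro n
      rw [← (hit n).2.2]
      exact measure_mono (hsmall n)
    -- limit of the measures of the shrinking balls
    set B : ℕ → Set ℂ := fun n => ball (0:ℂ) (κ ^ n * r') with hBdef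
    have hanti : Antitone B := by
      intro m n hmn
      exact ball_subset_ball (by
        have := pow_le_pow_of_le_one hκ0.le hκ1.le hmn
        nlinarith)
    have hInter : ⋂ n, B n = {0} := by
      ext z
      simp only [Set.mem_iInter, Set.mem_singleton_iff, hBdef, mem_ball, Complex.dist_eq,
        sub_zero]
      constructor
      · intro hz
        by_contra hz0
        have hzpos : 0 < ‖z‖ := by
          simpa using hz0
        have htend : Filter.Tendsto (fun n => κ ^ n * r') Filter.atTop (nhds 0) := by
          have := tendsto_pow_atTop_nhds_zero_of_lt_one hκ0.le hκ1
          simpa using this.mul_const r'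
        obtain ⟨n, hn⟩ := (htend.eventually (gt_mem_nhds hzpos)).exists
        exact absurd (hz n) (not_lt.mpr hn.le)
      · intro hz n
        rw [hz]
        simp
        positivity
    have hμ0 : μ ({(0:ℂ)}) = 0 := by
      refine measure_mono_null ?_ hnull
      intro z hz
      simp only [Set.mem_singleton_iff] at hz
      subst hz
      simp [hSdef]
    have htendμ : Filter.Tendsto (μ ∘ B) Filter.atTop (nhds 0) := by
      have := tendsto_measure_iInter_atTop (μ := μ)
        (fun n => measurableSet_ball.nullMeasurableSet) hanti ⟨0, measure_ne_top μ _⟩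
      rwa [hInter, hμ0] at this
    have : μ K ≤ 0 := ge_of_tendsto' htendμ (fun n => hbd n)
    exact le_antisymm this zero_le
  -- conclude via inner regularity
  have hSmeas : MeasurableSet S :=
    (isOpen_ball.sdiff isClosed_singleton).measurableSet
  have hμS : μ S = 0 := by
    rw [hSmeas.measure_eq_iSup_isCompact μ]
    simp only [ENNReal.iSup_eq_zero]
    intro K
    by_cases hKS : K ⊆ S
    · simp only [hKS, iSup_pos]
      intro hK
      by_cases hKc : IsCompact K
      · simp [hKc, hcompact K hKc hKS]
      · simp [hKc]
    · simp [hKS]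
  have : μ Set.univ = 0 := by
    have : μ Set.univ ≤ μ S + μ Sᶜ := by
      rw [← Set.union_compl_self S]
      exact measure_union_le _ _
    rw [hμS, hnull] at this
    simpa using this
  exact Measure.measure_univ_eq_zero.mp this
end

section
/- Work in ℂ[[t]]. Let r ≥ 1 be an integer, β ∈ ℂ, and ν, λ ∈ ℂ \ {0}. Let a(t) = ν·t, and let b ∈ t·ℂ[[t]] satisfy b ≡ λ·t (mod t^{r+1}) and b ≡ λ·t + λβ·t^{r+1} (mod t^{r+2}). Then the commutator satisfies (a ∘ b ∘ a⁻¹) ∘ b⁻¹ ≡ t + β·λ^{−r}·(ν^{−r} − 1)·t^{r+1} (mod t^{r+2}). In particular, when ν^{r} ≠ 1 and β ≠ 0, the commutator of the linear map a with b is tangent to the identity to order exactly r, with explicitly computed leading coefficient. -/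
open PowerSeries Finset

noncomputable def PSComp (f g : PowerSeries ℂ) : PowerSeries ℂ :=
  PowerSeries.mk fun n => ∑ k ∈ Finset.range (n + 1),
    (PowerSeries.coeff k f) * (PowerSeries.coeff n (g ^ k))

lemma PSComp_coeff (f g : PowerSeries ℂ) (n : ℕ) :
    coeff n (PSComp f g) = ∑ k ∈ range (n + 1),
      coeff k f * coeff n (g ^ k) := by
  simp [PSComp]

lemma pow_coeff_lt {g : PowerSeries ℂ} (hg : coeff 0 g = 0) {k j : ℕ} (h : j < k) :
    coeff j (g ^ k) = 0 := by
  have hX : (X : PowerSeries ℂ) ∣ g := X_dvd_iff.mpr (by rwa [← coeff_zero_eq_constantCoeff_apply])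
  exact (X_pow_dvd_iff.mp (pow_dvd_pow_of_dvd hX k)) j h

lemma pow_coeff_diag {g : PowerSeries ℂ} (hg : coeff 0 g = 0) :
    ∀ n, coeff n (g ^ n) = (coeff 1 g) ^ n := by
  intro n
  induction n with
  | zero => simp
  | succ n ih =>
    rw [pow_succ', coeff_mul, Finset.sum_eq_single (1, n)]
    · rw [ih]; ring
    · rintro ⟨i, j⟩ hp hne
      have hij : i + j = n + 1 := Finset.HasAntidiagonal.mem_antidiagonal.mp hp
      rcases Nat.eq_zero_or_pos i with h0 | hpos
      · subst h0; simp [hg]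
      · by_cases hi1 : i = 1
        · subst hi1
          have : j = n := by omega
          subst this
          exact absurd rfl hne
        · have : j < n := by omega
          rw [pow_coeff_lt hg this, mul_zero]
    · intro h
      exact absurd (Finset.HasAntidiagonal.mem_antidiagonal.mpr (by omega)) h

lemma comp_linear_right (f : PowerSeries ℂ) (c : ℂ) (n : ℕ) :
    coeff n (PSComp f (C c * X)) = coeff n f * c ^ n := by
  rw [PSComp_coeff, Finset.sum_eq_single n]
  · rw [mul_pow, ← map_pow, coeff_C_mul, coeff_X_pow]; simp
  · intro k hk hne
    rw [mul_pow, ← map_pow, coeff_C_mul, coeff_X_pow]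
    simp [Ne.symm hne]
  · intro h; simp at h

lemma comp_linear_left (c : ℂ) (g : PowerSeries ℂ) (hg : coeff 0 g = 0) (n : ℕ) :
    coeff n (PSComp (C c * X) g) = c * coeff n g := by
  rw [PSComp_coeff]
  rcases Nat.eq_zero_or_pos n with h0 | hpos
  · subst h0; simp [hg]
  · rw [Finset.sum_eq_single 1]
    · simp
    · intro k hk hne
      have : coeff k (C c * X) = 0 := by
        rw [coeff_C_mul, coeff_X, if_neg hne, mul_zero]
      rw [this, zero_mul]
    · intro h; simp at h; omega

/-- IV.1.5/IV.2: for `a(t) = ν·t` and `b ≡ λ·t + λβ·t^{r+1} (mod t^{r+2})`, the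
commutator satisfies
`(a ∘ b ∘ a⁻¹) ∘ b⁻¹ ≡ t + β·λ^{−r}·(ν^{−r} − 1)·t^{r+1} (mod t^{r+2})`. -/
theorem commutator_with_linear_leading_coeff
    (r : ℕ) (hr : 1 ≤ r) (β : ℂ) (ν lam : ℂ) (hν : ν ≠ 0) (hlam : lam ≠ 0)
    (b : PowerSeries ℂ)
    (hb_mod1 : ∀ j < r + 1, PowerSeries.coeff j b =
      PowerSeries.coeff j (PowerSeries.C lam * PowerSeries.X))
    (hb_mod2 : ∀ j < r + 2, PowerSeries.coeff j b =
      PowerSeries.coeff j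
        (PowerSeries.C lam * PowerSeries.X +
          PowerSeries.C (lam * β) * PowerSeries.X ^ (r + 1)))
    (binv : PowerSeries ℂ)
    (hbinv0 : PowerSeries.coeff 0 binv = 0)
    (hinv₁ : PSComp b binv = PowerSeries.X)
    (hinv₂ : PSComp binv b = PowerSeries.X) :
    ∀ j < r + 2,
      PowerSeries.coeff j
        (PSComp (PSComp (PSComp (PowerSeries.C ν * PowerSeries.X) b)
          (PowerSeries.C ν⁻¹ * PowerSeries.X)) binv) =
      PowerSeries.coeff j
        (PowerSeries.X +
          PowerSeries.C (β * lam⁻¹ ^ r * (ν⁻¹ ^ r - 1)) * PowerSeries.X ^ (r + 1)) := by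
  intro j hj
  have hb0 : coeff 0 b = 0 := by
    have := hb_mod1 0 (by omega); simpa using this
  have hb1 : coeff 1 b = lam := by
    have := hb_mod1 1 (by omega); simpa using this
  have hbmid : ∀ k, 2 ≤ k → k < r + 1 → coeff k b = 0 := by
    intro k h2 hk
    have := hb_mod1 k hk
    rw [this, coeff_C_mul, coeff_X, if_neg (by omega), mul_zero]
  have hbtop : coeff (r + 1) b = lam * β := by
    have := hb_mod2 (r + 1) (by omega)
    rw [this, map_add, coeff_C_mul, coeff_X, if_neg (by omega), coeff_C_mul, coeff_X_pow,
      if_pos rfl]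
    ring
  -- coefficient of binv at 1
  have hbinv1 : coeff 1 binv = lam⁻¹ := by
    have h := congrArg (coeff 1) hinv₁
    rw [PSComp_coeff] at h
    simp [Finset.sum_range_succ, hb0, hb1, coeff_X] at h
    field_simp
    linear_combination h
  -- A = a ∘ b ∘ a⁻¹
  set A := PSComp (PSComp (C ν * X) b) (C ν⁻¹ * X) with hAdef
  have hA : ∀ n, coeff n A = ν * coeff n b * (ν⁻¹) ^ n := by
    intro n
    rw [hAdef, comp_linear_right, comp_linear_left _ _ hb0]
  have hAeqb : ∀ k, k < r + 1 → coeff k A = coeff k b := by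
    intro k hk
    rcases Nat.eq_zero_or_pos k with h0 | hpos
    · subst h0; rw [hA, hb0]; ring
    · rcases Nat.eq_or_lt_of_le hpos with h1 | h2
      · rw [hA, ← h1, hb1, pow_one]
        field_simp
      · rw [hA, hbmid k h2 hk]; ring
  have hAtop : coeff (r + 1) A = lam * β * (ν⁻¹) ^ r := by
    rw [hA, hbtop, pow_succ']
    field_simp
  -- key computation
  have hX := congrArg (coeff j) hinv₁
  rw [PSComp_coeff] at hX
  rw [PSComp_coeff]
  have split : ∑ k ∈ range (j + 1), coeff k A * coeff j (binv ^ k) =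
      (∑ k ∈ range (j + 1), coeff k b * coeff j (binv ^ k)) +
      ∑ k ∈ range (j + 1), (coeff k A - coeff k b) * coeff j (binv ^ k) := by
    rw [← Finset.sum_add_distrib]
    apply Finset.sum_congr rfl
    intro k _; ring
  rw [split, hX]
  have hS : ∑ k ∈ range (j + 1), (coeff k A - coeff k b) * coeff j (binv ^ k) =
      if j = r + 1 then β * lam⁻¹ ^ r * (ν⁻¹ ^ r - 1) else 0 := by
    by_cases hjr : j = r + 1
    · subst hjr
      rw [if_pos rfl, Finset.sum_eq_single (r + 1)]
      · rw [hAtop, hbtop, pow_coeff_diag hbinv0, hbinv1]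
        have hcancel : lam * lam⁻¹ ^ (r + 1) = lam⁻¹ ^ r := by
          rw [pow_succ', ← mul_assoc, mul_inv_cancel₀ hlam, one_mul]
        calc (lam * β * ν⁻¹ ^ r - lam * β) * lam⁻¹ ^ (r + 1)
            = (β * ν⁻¹ ^ r - β) * (lam * lam⁻¹ ^ (r + 1)) := by ring
          _ = β * lam⁻¹ ^ r * (ν⁻¹ ^ r - 1) := by rw [hcancel]; ring
      · intro k hk hne
        have : k < r + 1 := by simp at hk; omega
        rw [hAeqb k this, sub_self, zero_mul]
      · intro h; simp at h
    · rw [if_neg hjr]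
      apply Finset.sum_eq_zero
      intro k hk
      have : k < r + 1 := by simp at hk; omega
      rw [hAeqb k this, sub_self, zero_mul]
  rw [hS]
  rw [map_add, coeff_C_mul, coeff_X_pow]
  by_cases hjr : j = r + 1
  · rw [if_pos hjr, if_pos hjr, mul_one]
  · rw [if_neg hjr, if_neg hjr, mul_zero]
end

section
/- Let d ≥ 1 and let n_1, …, n_d be integers with n_i ≥ 2 for every i and n_j ≥ 3 for at least one j, and let λ_1, …, λ_d ∈ (0,1) be real numbers satisfying λ_{i+1}·(n_i − λ_i) = 1 for 1 ≤ i ≤ d (indices modulo d). Set u = λ_1λ_2⋯λ_d and let M = ℤ + ℤλ_1 be the additive subgroup of ℝ generated by 1 and λ_1. Then 0 < u < 1 and u·M = M; in particular multiplication by u is an automorphism of the group M, and the induced action of ℤ on M by powers of u is faithful. -/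
lemma zmod_prod_shift {d : ℕ} [NeZero d] (f : ZMod d → ℝ) (c : ZMod d) :
    ∏ j ∈ Finset.range d, f ((j : ZMod d) + c) = ∏ i : ZMod d, f i := by
  rw [← Fin.prod_univ_eq_prod_range (fun j => f ((j : ZMod d) + c)) d]
  apply Fintype.prod_bijective (fun j : Fin d => ((j.val : ZMod d) + c)) ?_ _ _ (fun x => rfl)
  constructor
  · intro x y h
    have := congrArg (fun z => (z - c).val) h
    simpa [ZMod.val_cast_of_lt x.isLt, ZMod.val_cast_of_lt y.isLt, Fin.ext_iff] using this
  · intro i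
    refine ⟨⟨(i - c).val, ZMod.val_lt _⟩, ?_⟩
    simp [ZMod.natCast_val, ZMod.cast_id]

/-- Example I.4.2 (faithfulness): with `λ_i ∈ (0,1)` satisfying the cyclic
recurrence `λ_{i+1}(n_i − λ_i) = 1`, the product `u = λ_1⋯λ_d` lies in `(0,1)`,
multiplication by `u` maps `M = ℤ + ℤλ_1` onto itself, and the induced `ℤ`-action
on `M` by powers of `u` is faithful. -/
theorem cycle_acts_faithfully_on_module
    (d : ℕ) [NeZero d] (n : ZMod d → ℤ)
    (hn2 : ∀ i, 2 ≤ n i) (hn3 : ∃ j, 3 ≤ n j)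
    (lam : ZMod d → ℝ)
    (hlam : ∀ i, lam i ∈ Set.Ioo (0 : ℝ) 1)
    (hrec : ∀ i, lam (i + 1) * ((n i : ℝ) - lam i) = 1)
    (u : ℝ) (hu : u = ∏ i : ZMod d, lam i)
    (M : Set ℝ) (hM : M = {x : ℝ | ∃ a b : ℤ, x = (a : ℝ) + (b : ℝ) * lam 1}) :
    0 < u ∧ u < 1 ∧ (fun x => u * x) '' M = M ∧
      ∀ k : ℤ, (∀ x ∈ M, u ^ k * x = x) → k = 0 := by
  -- positivity and < 1
  have hdpos : 0 < d := Nat.pos_of_ne_zero (NeZero.ne d)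
  have hupos : 0 < u := by
    rw [hu]; exact Finset.prod_pos fun i _ => (hlam i).1
  have hult : u < 1 := by
    rw [hu]
    calc ∏ i : ZMod d, lam i < ∏ _i : ZMod d, (1 : ℝ) := by
          apply Finset.prod_lt_prod_of_nonempty (fun i _ => (hlam i).1)
            (fun i _ => (hlam i).2)
          exact Finset.univ_nonempty
      _ = 1 := by simp
  -- the key induction: partial products act on the lattices ℤ + ℤ·lam(k+1)
  have main : ∀ k : ℕ, ∃ a b c e : ℤ, a * e - b * c = 1 ∧
      (∏ j ∈ Finset.range k, lam ((j : ZMod d) + 2)) = a + b * lam ((k : ZMod d) + 1) ∧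
      (∏ j ∈ Finset.range k, lam ((j : ZMod d) + 2)) * lam 1
        = c + e * lam ((k : ZMod d) + 1) := by
    intro k
    induction k with
    | zero => exact ⟨1, 0, 0, 1, by ring, by simp, by simp⟩
    | succ k ih =>
      obtain ⟨a, b, c, e, hdet, h1, h2⟩ := ih
      have hr := hrec ((k : ZMod d) + 1)
      rw [show ((k : ZMod d) + 1 + 1 : ZMod d) = (k : ZMod d) + 2 from by ring] at hr
      have hcast : (((k + 1 : ℕ) : ZMod d) + 1) = (k : ZMod d) + 2 := by push_cast; ring
      refine ⟨-b, a + b * n ((k : ZMod d) + 1), -e, c + e * n ((k : ZMod d) + 1),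
        by linear_combination hdet, ?_, ?_⟩
      · rw [Finset.prod_range_succ, hcast]
        push_cast
        linear_combination lam ((k : ZMod d) + 2) * h1 - (b : ℝ) * hr
      · rw [Finset.prod_range_succ, hcast]
        push_cast
        linear_combination lam ((k : ZMod d) + 2) * h2 - (e : ℝ) * hr
  obtain ⟨a, b, c, e, hdet, h1, h2⟩ := main d
  rw [ZMod.natCast_self, zero_add, zmod_prod_shift lam 2, ← hu] at h1 h2
  have hdetR : (a : ℝ) * e - b * c = 1 := by exact_mod_cast hdet
  refine ⟨hupos, hult, ?_, ?_⟩
  · -- u • M = M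
    ext x
    constructor
    · rintro ⟨y, hy, rfl⟩
      rw [hM] at hy ⊢
      obtain ⟨p, q, rfl⟩ := hy
      refine ⟨p * a + q * c, p * b + q * e, ?_⟩
      push_cast
      linear_combination (p : ℝ) * h1 + (q : ℝ) * h2
    · intro hx
      rw [hM] at hx
      obtain ⟨p, q, rfl⟩ := hx
      refine ⟨((p * e - q * c : ℤ) : ℝ) + ((-(p * b) + q * a : ℤ) : ℝ) * lam 1,
        by rw [hM]; exact ⟨p * e - q * c, -(p * b) + q * a, rfl⟩, ?_⟩
      push_cast
      linear_combination ((p : ℝ) * e - q * c) * h1 + (-((p : ℝ) * b) + q * a) * h2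
        + ((p : ℝ) + q * lam 1) * hdetR
  · -- faithfulness
    intro k hk
    have h1M : (1 : ℝ) ∈ M := by rw [hM]; exact ⟨1, 0, by simp⟩
    have huk : u ^ k = 1 := by simpa using hk 1 h1M
    exact zpow_right_injective₀ hupos (ne_of_lt hult) (by simpa using huk)
end
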